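/- Let n ≥ 5 and let I ⊆ ZMod n be a subset with 2 ≤ |I| ≤ n-2 whose induced subgraph in the cycle graph has exactly two connected components. Write I = I₁ ⊔ I₂ and Iᶜ = J₁ ⊔ J₂ as disjoint unions of arcs. Then for every subset K ⊆ ZMod n with 2 ≤ |K| ≤ n-2 whose induced subgraph has at least two connected components, the combinatorial pairing F(I₁,I₂,J₁,J₂)·D_K equals 1 if K = I or K = Iᶜ, and 0 otherwise. -/
import Mathlib


/-- The cycle graph on `ZMod n`: `i` and `j` are adjacent iff `j = i + 1` or `i = j + 1`. -/
def cycleGraph (n : ℕ) : SimpleGraph (ZMod n) :=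
  SimpleGraph.fromRel (fun i j => j = i + 1)

/-- An *arc* in `ZMod n` is a nonempty set of the form `{a, a+1, …, a+k-1}`
(equivalently, a nonempty subset inducing a connected subgraph of the cycle graph). -/
def IsArc {n : ℕ} (S : Finset (ZMod n)) : Prop :=
  ∃ (a : ZMod n) (k : ℕ), 1 ≤ k ∧
    S = Finset.image (fun i : ℕ => a + (i : ZMod n)) (Finset.range k)

/-- The combinatorial intersection pairing `F(A₁,A₂,A₃,A₄) · D_K`. -/
def pairF {n : ℕ} [NeZero n] (A₁ A₂ A₃ A₄ K : Finset (ZMod n)) : ℤ :=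
  if (K = A₁ ∪ A₂ ∧ Kᶜ = A₃ ∪ A₄) ∨ (K = A₁ ∪ A₃ ∧ Kᶜ = A₂ ∪ A₄) ∨
     (K = A₁ ∪ A₄ ∧ Kᶜ = A₂ ∪ A₃) ∨ (K = A₂ ∪ A₃ ∧ Kᶜ = A₁ ∪ A₄) ∨
     (K = A₂ ∪ A₄ ∧ Kᶜ = A₁ ∪ A₃) ∨ (K = A₃ ∪ A₄ ∧ Kᶜ = A₁ ∪ A₂) then 1
  else if (K = A₁ ∧ 2 ≤ A₁.card) ∨ (K = A₂ ∧ 2 ≤ A₂.card) ∨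
          (K = A₃ ∧ 2 ≤ A₃.card) ∨ (K = A₄ ∧ 2 ≤ A₄.card) ∨
          (Kᶜ = A₁ ∧ 2 ≤ A₁.card) ∨ (Kᶜ = A₂ ∧ 2 ≤ A₂.card) ∨
          (Kᶜ = A₃ ∧ 2 ≤ A₃.card) ∨ (Kᶜ = A₄ ∧ 2 ≤ A₄.card) then -1
  else 0


set_option linter.unusedSectionVars false

open Finset

variable {n : ℕ} [NeZero n]

/-- normalized arc -/
def arcOf (a : ZMod n) (k : ℕ) : Finset (ZMod n) :=
  Finset.image (fun i : ℕ => a + (i : ZMod n)) (Finset.range k)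

lemma mem_arcOf {a : ZMod n} {k : ℕ} {x : ZMod n} :
    x ∈ arcOf a k ↔ ∃ i < k, a + (i : ZMod n) = x := by
  simp [arcOf]

lemma arcOf_mem {a : ZMod n} {k i : ℕ} (h : i < k) : a + (i : ZMod n) ∈ arcOf a k :=
  mem_arcOf.mpr ⟨i, h, rfl⟩

lemma arcOf_nonempty {a : ZMod n} {k : ℕ} (hk : 1 ≤ k) : (arcOf a k).Nonempty :=
  ⟨a + ((0 : ℕ) : ZMod n), arcOf_mem hk⟩

lemma IsArc.nonempty {S : Finset (ZMod n)} (h : IsArc S) : S.Nonempty := by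
  obtain ⟨a, k, hk, rfl⟩ := h
  exact arcOf_nonempty hk

lemma isArc_norm {S : Finset (ZMod n)} (h : IsArc S) (hS : S ≠ Finset.univ) :
    ∃ a k, 1 ≤ k ∧ k < n ∧ S = arcOf a k := by
  obtain ⟨a, k, hk, rfl⟩ := h
  refine ⟨a, k, hk, ?_, rfl⟩
  by_contra hkn
  push_neg at hkn
  apply hS
  ext x
  simp only [Finset.mem_univ, iff_true]
  exact Finset.mem_image.mpr ⟨(x - a).val,
    Finset.mem_range.mpr (lt_of_lt_of_le (ZMod.val_lt _) hkn),
    by rw [ZMod.natCast_zmod_val]; ring⟩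

lemma mem_arcOf_iff {a : ZMod n} {k : ℕ} (hkn : k < n) {x : ZMod n} :
    x ∈ arcOf a k ↔ (x - a).val < k := by
  constructor
  · intro h
    obtain ⟨i, hi, he⟩ := mem_arcOf.mp h
    have : x - a = (i : ZMod n) := by rw [← he]; ring
    rw [this, ZMod.val_cast_of_lt (by omega)]
    exact hi
  · intro h
    exact mem_arcOf.mpr ⟨(x - a).val, h, by rw [ZMod.natCast_zmod_val]; ring⟩

lemma arcEnd_mem {a : ZMod n} {k : ℕ} (hk : 1 ≤ k) :
    a + ((k - 1 : ℕ) : ZMod n) ∈ arcOf a k :=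
  arcOf_mem (by omega)

lemma arcEnd_succ {a : ZMod n} {k : ℕ} (hk : 1 ≤ k) :
    a + ((k - 1 : ℕ) : ZMod n) + 1 = a + (k : ZMod n) := by
  have : ((k - 1 : ℕ) : ZMod n) + 1 = ((k - 1 + 1 : ℕ) : ZMod n) := by push_cast; ring
  rw [add_assoc, this, Nat.sub_add_cancel hk]

lemma arcOf_exit {a : ZMod n} {k : ℕ} (hkn : k < n) :
    a + (k : ZMod n) ∉ arcOf a k := by
  rw [mem_arcOf_iff hkn]
  have : a + (k : ZMod n) - a = (k : ZMod n) := by ring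
  rw [this, ZMod.val_cast_of_lt hkn]
  omega

lemma arcEnd_succ_notMem {a : ZMod n} {k : ℕ} (hk : 1 ≤ k) (hkn : k < n) :
    a + ((k - 1 : ℕ) : ZMod n) + 1 ∉ arcOf a k := by
  rw [arcEnd_succ hk]; exact arcOf_exit hkn

lemma arc_exit_unique {a : ZMod n} {k : ℕ} (hkn : k < n) {x : ZMod n}
    (hx : x ∈ arcOf a k) (hx1 : x + 1 ∉ arcOf a k) :
    x = a + ((k - 1 : ℕ) : ZMod n) := by
  rw [mem_arcOf_iff hkn] at hx hx1
  set v := (x - a).val with hv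
  have h1 : x + 1 - a = ((v + 1 : ℕ) : ZMod n) := by
    push_cast
    have : ((v : ℕ) : ZMod n) = x - a := ZMod.natCast_zmod_val _
    rw [this]; ring
  rw [h1, ZMod.val_cast_of_lt (by omega)] at hx1
  have hvk : v = k - 1 := by omega
  have : x = a + ((v : ℕ) : ZMod n) := by rw [ZMod.natCast_zmod_val]; ring
  rw [this, hvk]

lemma arc_entry_unique {a : ZMod n} {k : ℕ} (hkn : k < n) {x : ZMod n}
    (hx : x ∉ arcOf a k) (hx1 : x + 1 ∈ arcOf a k) :
    x + 1 = a := by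
  rw [mem_arcOf_iff hkn] at hx hx1
  set w := (x + 1 - a).val with hw
  have hxw : x + 1 = a + ((w : ℕ) : ZMod n) := by rw [ZMod.natCast_zmod_val]; ring
  rcases Nat.eq_zero_or_pos w with h0 | h1
  · rw [hxw, h0]; simp
  · exfalso
    apply hx
    have : x - a = ((w - 1 : ℕ) : ZMod n) := by
      have hc : ((w - 1 : ℕ) : ZMod n) + 1 = ((w : ℕ) : ZMod n) := by
        have : ((w - 1 + 1 : ℕ) : ZMod n) = ((w : ℕ) : ZMod n) := by rw [Nat.sub_add_cancel h1]
        rw [← this]; push_cast; ring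
      have hx1' : x + 1 = a + (((w - 1 : ℕ) : ZMod n) + 1) := by rw [hc, ← hxw]
      have := add_right_cancel (a := x) (b := (1 : ZMod n)) (c := a + ((w - 1 : ℕ) : ZMod n)) (by rw [hx1']; ring)
      rw [this]; ring
    rw [this, ZMod.val_cast_of_lt (by omega)]
    omega

lemma closed_eq_univ {T : Finset (ZMod n)} (hne : T.Nonempty)
    (h : ∀ i ∈ T, i + 1 ∈ T) : T = Finset.univ := by
  obtain ⟨a, ha⟩ := hne
  have key : ∀ m : ℕ, a + (m : ZMod n) ∈ T := by
    intro m
    induction m with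
    | zero => simpa using ha
    | succ m ih =>
      have h2 := h _ ih
      have : a + ((m + 1 : ℕ) : ZMod n) = a + (m : ZMod n) + 1 := by push_cast; ring
      rw [this]; exact h2
  ext x
  simp only [Finset.mem_univ, iff_true]
  have := key (x - a).val
  rwa [ZMod.natCast_zmod_val, add_sub_cancel] at this

set_option linter.unusedSectionVars false

lemma cycle_adj_succ (hn : 2 ≤ n) (x : ZMod n) : (cycleGraph n).Adj x (x + 1) := by
  haveI : Fact (1 < n) := ⟨by omega⟩
  have hne : x ≠ x + 1 := by
    intro h
    have : (0 : ZMod n) = 1 := by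
      have := add_right_cancel (a := (0 : ZMod n)) (b := x) (c := (1 : ZMod n)) (by rw [zero_add, add_comm]; exact h)
      exact this
    exact zero_ne_one this
  have : (cycleGraph n).Adj x (x + 1) ↔ x ≠ x + 1 ∧ (x + 1 = x + 1 ∨ x = x + 1 + 1) := by
    rw [cycleGraph, SimpleGraph.fromRel_adj]
  exact this.mpr ⟨hne, Or.inl rfl⟩

lemma induce_adj_of {U : Set (ZMod n)} {x y : ↥U} (h : (cycleGraph n).Adj ↑x ↑y) :
    ((cycleGraph n).induce U).Adj x y := h

lemma reach_base (hn : 2 ≤ n) {U : Set (ZMod n)} {a : ZMod n} {k : ℕ}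
    (hsub : ∀ i : ℕ, i < k → a + (i : ZMod n) ∈ U) :
    ∀ i : ℕ, ∀ hi : i < k, ((cycleGraph n).induce U).Reachable
      ⟨a + ((0 : ℕ) : ZMod n), hsub 0 (Nat.lt_of_le_of_lt (Nat.zero_le _) hi)⟩
      ⟨a + (i : ZMod n), hsub i hi⟩ := by
  intro i
  induction i with
  | zero => intro hi; exact SimpleGraph.Reachable.refl _
  | succ i ih =>
    intro hi
    have hi' : i < k := Nat.lt_of_succ_lt hi
    refine (ih hi').trans ?_
    apply SimpleGraph.Adj.reachable
    apply induce_adj_of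
    show (cycleGraph n).Adj (a + (i : ZMod n)) (a + ((i + 1 : ℕ) : ZMod n))
    have h2 : a + ((i + 1 : ℕ) : ZMod n) = (a + (i : ZMod n)) + 1 := by push_cast; ring
    rw [h2]
    exact cycle_adj_succ hn _

lemma arc_reach (hn : 2 ≤ n) {U : Set (ZMod n)} {a : ZMod n} {k : ℕ}
    (hsub : ∀ i : ℕ, i < k → a + (i : ZMod n) ∈ U) {x y : ↥U}
    (hx : ∃ i < k, a + (i : ZMod n) = ↑x) (hy : ∃ i < k, a + (i : ZMod n) = ↑y) :
    ((cycleGraph n).induce U).Reachable x y := by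
  obtain ⟨i, hi, hxe⟩ := hx
  obtain ⟨j, hj, hye⟩ := hy
  have h1 := reach_base hn hsub i hi
  have h2 := reach_base hn hsub j hj
  have hx' : (⟨a + (i : ZMod n), hsub i hi⟩ : ↥U) = x := Subtype.ext hxe
  have hy' : (⟨a + (j : ZMod n), hsub j hj⟩ : ↥U) = y := Subtype.ext hye
  rw [hx'] at h1
  rw [hy'] at h2
  exact h1.symm.trans h2

lemma arc_connected (hn : 2 ≤ n) (a : ZMod n) {k : ℕ} (hk : 1 ≤ k) :
    ((cycleGraph n).induce ((arcOf a k : Finset (ZMod n)) : Set (ZMod n))).Connected := by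
  rw [SimpleGraph.connected_iff]
  have hsub : ∀ i : ℕ, i < k → a + (i : ZMod n) ∈ ((arcOf a k : Finset (ZMod n)) : Set (ZMod n)) :=
    fun i hi => Finset.mem_coe.mpr (arcOf_mem hi)
  refine ⟨?_, ⟨⟨a + ((0 : ℕ) : ZMod n), hsub 0 hk⟩⟩⟩
  intro x y
  exact arc_reach hn hsub (mem_arcOf.mp (Finset.mem_coe.mp x.2)) (mem_arcOf.mp (Finset.mem_coe.mp y.2))

lemma union_connected (hn : 2 ≤ n) (a c : ZMod n) {k m : ℕ} (hk : 1 ≤ k) (hm : 1 ≤ m)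
    {e : ZMod n} (he : e ∈ arcOf a k) (he1 : e + 1 ∈ arcOf c m) :
    ((cycleGraph n).induce ((arcOf a k ∪ arcOf c m : Finset (ZMod n)) : Set (ZMod n))).Connected := by
  set U : Set (ZMod n) := ((arcOf a k ∪ arcOf c m : Finset (ZMod n)) : Set (ZMod n)) with hU
  have hsubA : ∀ i : ℕ, i < k → a + (i : ZMod n) ∈ U :=
    fun i hi => Finset.mem_coe.mpr (Finset.mem_union_left _ (arcOf_mem hi))
  have hsubC : ∀ i : ℕ, i < m → c + (i : ZMod n) ∈ U :=
    fun i hi => Finset.mem_coe.mpr (Finset.mem_union_right _ (arcOf_mem hi))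
  have heU : e ∈ U := Finset.mem_coe.mpr (Finset.mem_union_left _ he)
  have he1U : e + 1 ∈ U := Finset.mem_coe.mpr (Finset.mem_union_right _ he1)
  have key : ∀ x : ↥U, ((cycleGraph n).induce U).Reachable x ⟨e, heU⟩ := by
    intro x
    rcases Finset.mem_union.mp (Finset.mem_coe.mp x.2) with hx | hx
    · exact arc_reach hn hsubA (mem_arcOf.mp hx) (mem_arcOf.mp he)
    · have r1 : ((cycleGraph n).induce U).Reachable x ⟨e + 1, he1U⟩ :=
        arc_reach hn hsubC (mem_arcOf.mp hx) (mem_arcOf.mp he1)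
      have step : ((cycleGraph n).induce U).Adj ⟨e + 1, he1U⟩ ⟨e, heU⟩ :=
        induce_adj_of (cycle_adj_succ hn e).symm
      exact r1.trans step.reachable
  rw [SimpleGraph.connected_iff]
  exact ⟨fun x y => (key x).trans (key y).symm, ⟨⟨e, heU⟩⟩⟩

lemma conn_card_one {U : Set (ZMod n)} (h : ((cycleGraph n).induce U).Connected) :
    Nat.card ((cycleGraph n).induce U).ConnectedComponent = 1 := by
  haveI := h.preconnected.subsingleton_connectedComponent
  haveI : Nonempty ((cycleGraph n).induce U).ConnectedComponent :=
    ⟨((cycleGraph n).induce U).connectedComponentMk h.nonempty.some⟩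
  exact Nat.card_eq_one_iff_unique.mpr ⟨inferInstance, inferInstance⟩

lemma arcOf_compl {a : ZMod n} {k : ℕ} (hk1 : 1 ≤ k) (hkn : k < n) :
    (arcOf a k)ᶜ = arcOf (a + (k : ZMod n)) (n - k) := by
  ext x
  rw [Finset.mem_compl, mem_arcOf_iff hkn, mem_arcOf_iff (by omega : n - k < n)]
  set v := (x - a).val with hv
  have hvn : v < n := ZMod.val_lt _
  have hxa : (v : ZMod n) = x - a := ZMod.natCast_zmod_val _
  by_cases hcase : k ≤ v
  · have : x - (a + (k : ZMod n)) = ((v - k : ℕ) : ZMod n) := by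
      rw [Nat.cast_sub hcase, hxa]; ring
    rw [this, ZMod.val_cast_of_lt (by omega)]
    omega
  · have hkv : v < k := lt_of_not_ge hcase
    have : x - (a + (k : ZMod n)) = ((n - (k - v) : ℕ) : ZMod n) := by
      rw [Nat.cast_sub (by omega : k - v ≤ n), Nat.cast_sub (le_of_lt hkv), ZMod.natCast_self, hxa]
      ring
    rw [this, ZMod.val_cast_of_lt (by omega)]
    omega

lemma mixed_impossible (hn : 5 ≤ n) (A B C D : Finset (ZMod n))
    (hAB : Disjoint A B) (hCD : Disjoint C D)
    (hcompl : C ∪ D = (A ∪ B)ᶜ)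
    (hA : IsArc A) (hB : IsArc B) (hC : IsArc C) (hD : IsArc D)
    (hI2 : Nat.card ((cycleGraph n).induce ((A ∪ B : Finset (ZMod n)) : Set (ZMod n))).ConnectedComponent = 2)
    (hK2 : 2 ≤ Nat.card ((cycleGraph n).induce ((A ∪ C : Finset (ZMod n)) : Set (ZMod n))).ConnectedComponent) :
    False := by
  have hn2 : 2 ≤ n := by omega
  -- cross disjointness
  have hCsub : C ⊆ (A ∪ B)ᶜ := hcompl ▸ Finset.subset_union_left
  have hDsub : D ⊆ (A ∪ B)ᶜ := hcompl ▸ Finset.subset_union_right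
  have hAC : Disjoint A C := by
    rw [Finset.disjoint_left]
    intro a ha hc
    exact (Finset.mem_compl.mp (hCsub hc)) (Finset.mem_union_left _ ha)
  have hAD : Disjoint A D := by
    rw [Finset.disjoint_left]
    intro a ha hc
    exact (Finset.mem_compl.mp (hDsub hc)) (Finset.mem_union_left _ ha)
  have hBC : Disjoint B C := by
    rw [Finset.disjoint_left]
    intro a ha hc
    exact (Finset.mem_compl.mp (hCsub hc)) (Finset.mem_union_right _ ha)
  have hBD : Disjoint B D := by
    rw [Finset.disjoint_left]
    intro a ha hc
    exact (Finset.mem_compl.mp (hDsub hc)) (Finset.mem_union_right _ ha)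
  -- properness
  have hprop : ∀ X Y : Finset (ZMod n), Disjoint X Y → Y.Nonempty → X ≠ Finset.univ := by
    intro X Y hd ⟨y, hy⟩ h
    exact (Finset.disjoint_left.mp hd (h ▸ Finset.mem_univ y)) hy
  obtain ⟨aA, kA, hkA1, hkAn, rfl⟩ := isArc_norm hA (hprop _ _ hAC hC.nonempty)
  obtain ⟨aB, kB, hkB1, hkBn, rfl⟩ := isArc_norm hB (hprop _ _ hBC hC.nonempty)
  obtain ⟨aC, kC, hkC1, hkCn, rfl⟩ := isArc_norm hC (hprop _ _ hAC.symm hA.nonempty)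
  obtain ⟨aD, kD, hkD1, hkDn, rfl⟩ := isArc_norm hD (hprop _ _ hAD.symm hA.nonempty)
  set eA := aA + ((kA - 1 : ℕ) : ZMod n) with heA
  set eB := aB + ((kB - 1 : ℕ) : ZMod n) with heB
  set eC := aC + ((kC - 1 : ℕ) : ZMod n) with heC
  set eD := aD + ((kD - 1 : ℕ) : ZMod n) with heD
  have hAx : eA ∈ arcOf aA kA := arcEnd_mem hkA1
  have hBx : eB ∈ arcOf aB kB := arcEnd_mem hkB1
  have hCx : eC ∈ arcOf aC kC := arcEnd_mem hkC1
  have hDx : eD ∈ arcOf aD kD := arcEnd_mem hkD1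
  have hAx1 : eA + 1 ∉ arcOf aA kA := arcEnd_succ_notMem hkA1 hkAn
  have hBx1 : eB + 1 ∉ arcOf aB kB := arcEnd_succ_notMem hkB1 hkBn
  have hCx1 : eC + 1 ∉ arcOf aC kC := arcEnd_succ_notMem hkC1 hkCn
  have hDx1 : eD + 1 ∉ arcOf aD kD := arcEnd_succ_notMem hkD1 hkDn
  -- partition facts
  have hpart1 : ∀ x : ZMod n, x ∉ arcOf aA kA → x ∉ arcOf aB kB →
      x ∈ arcOf aC kC ∨ x ∈ arcOf aD kD := by
    intro x h1 h2
    have : x ∈ arcOf aC kC ∪ arcOf aD kD := by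
      rw [hcompl, Finset.mem_compl, Finset.mem_union]
      rintro (h | h) <;> [exact h1 h; exact h2 h]
    exact Finset.mem_union.mp this
  have hpart2 : ∀ x : ZMod n, x ∉ arcOf aC kC → x ∉ arcOf aD kD →
      x ∈ arcOf aA kA ∨ x ∈ arcOf aB kB := by
    intro x h1 h2
    have hx : x ∉ arcOf aC kC ∪ arcOf aD kD := by
      rw [Finset.mem_union]; rintro (h | h) <;> [exact h1 h; exact h2 h]
    rw [hcompl, Finset.mem_compl, not_not] at hx
    exact Finset.mem_union.mp hx
  -- from hI2 : no adjacency between A and B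
  have nAB : eA + 1 ∉ arcOf aB kB := by
    intro hmem
    have hc := union_connected hn2 aA aB hkA1 hkB1 hAx hmem
    have := conn_card_one hc
    exact absurd (this.symm.trans hI2) (by norm_num)
  have nBA : eB + 1 ∉ arcOf aA kA := by
    intro hmem
    have hc := union_connected hn2 aB aA hkB1 hkA1 hBx hmem
    rw [Finset.union_comm] at hc
    have := conn_card_one hc
    exact absurd (this.symm.trans hI2) (by norm_num)
  -- from hK2 : no adjacency between A and C
  have nAC : eA + 1 ∉ arcOf aC kC := by
    intro hmem
    have hc := union_connected hn2 aA aC hkA1 hkC1 hAx hmem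
    have := conn_card_one hc
    rw [this] at hK2
    exact absurd hK2 (by norm_num)
  have nCA : eC + 1 ∉ arcOf aA kA := by
    intro hmem
    have hc := union_connected hn2 aC aA hkC1 hkA1 hCx hmem
    rw [Finset.union_comm] at hc
    have := conn_card_one hc
    rw [this] at hK2
    exact absurd hK2 (by norm_num)
  -- chase exits
  have hAD' : eA + 1 ∈ arcOf aD kD := (hpart1 _ hAx1 nAB).resolve_left nAC
  have hBC' : eB + 1 ∈ arcOf aC kC := by
    refine (hpart1 _ nBA hBx1).resolve_right ?_
    intro hmem
    have h1 : eA + 1 = aD := arc_entry_unique hkDn (Finset.disjoint_left.mp hAD hAx) hAD'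
    have h2 : eB + 1 = aD := arc_entry_unique hkDn (Finset.disjoint_left.mp hBD hBx) hmem
    have : eA = eB := by
      have := h1.trans h2.symm
      exact add_right_cancel this
    exact (Finset.disjoint_left.mp hAB hAx) (this ▸ hBx)
  have hCB' : eC + 1 ∈ arcOf aB kB := by
    have hnotD : eC + 1 ∉ arcOf aD kD := by
      intro hmem
      have h1 : eA + 1 = aD := arc_entry_unique hkDn (Finset.disjoint_left.mp hAD hAx) hAD'
      have h2 : eC + 1 = aD := arc_entry_unique hkDn (Finset.disjoint_left.mp hCD hCx) hmem
      have heq : eA = eC := add_right_cancel (h1.trans h2.symm)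
      exact (Finset.disjoint_left.mp hAC hAx) (heq ▸ hCx)
    exact (hpart2 _ hCx1 hnotD).resolve_left nCA
  have hDA' : eD + 1 ∈ arcOf aA kA := by
    have hnotC : eD + 1 ∉ arcOf aC kC := by
      intro hmem
      have h1 : eB + 1 = aC := arc_entry_unique hkCn (Finset.disjoint_left.mp hBC hBx) hBC'
      have h2 : eD + 1 = aC := arc_entry_unique hkCn (Finset.disjoint_left.mp hCD.symm hDx) hmem
      have heq : eB = eD := add_right_cancel (h1.trans h2.symm)
      exact (Finset.disjoint_left.mp hBD hBx) (heq ▸ hDx)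
    have hnotB : eD + 1 ∉ arcOf aB kB := by
      intro hmem
      have h1 : eC + 1 = aB := arc_entry_unique hkBn (Finset.disjoint_left.mp hBC.symm hCx) hCB'
      have h2 : eD + 1 = aB := arc_entry_unique hkBn (Finset.disjoint_left.mp hBD.symm hDx) hmem
      have heq : eC = eD := add_right_cancel (h1.trans h2.symm)
      exact (Finset.disjoint_left.mp hCD hCx) (heq ▸ hDx)
    exact (hpart2 _ hnotC hDx1).resolve_right hnotB
  -- closure of A ∪ D
  have hTcl : ∀ i ∈ arcOf aA kA ∪ arcOf aD kD, i + 1 ∈ arcOf aA kA ∪ arcOf aD kD := by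
    intro i hi
    rcases Finset.mem_union.mp hi with hiA | hiD
    · by_cases h : i + 1 ∈ arcOf aA kA
      · exact Finset.mem_union_left _ h
      · have : i = eA := arc_exit_unique hkAn hiA h
        rw [this]
        exact Finset.mem_union_right _ hAD'
    · by_cases h : i + 1 ∈ arcOf aD kD
      · exact Finset.mem_union_right _ h
      · have : i = eD := arc_exit_unique hkDn hiD h
        rw [this]
        exact Finset.mem_union_left _ hDA'
  have hT : arcOf aA kA ∪ arcOf aD kD = Finset.univ :=
    closed_eq_univ ⟨eA, Finset.mem_union_left _ hAx⟩ hTcl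
  have : eB ∈ arcOf aA kA ∪ arcOf aD kD := hT ▸ Finset.mem_univ eB
  rcases Finset.mem_union.mp this with h | h
  · exact (Finset.disjoint_left.mp hAB.symm hBx) h
  · exact (Finset.disjoint_left.mp hBD hBx) h

theorem stmt8 (n : ℕ) [NeZero n] (hn : 5 ≤ n) (I I₁ I₂ J₁ J₂ : Finset (ZMod n))
    (hIc1 : 2 ≤ I.card) (hIc2 : I.card ≤ n - 2)
    -- the induced subgraph on `I` has exactly two connected components
    (hIcomp : Nat.card ((cycleGraph n).induce (I : Set (ZMod n))).ConnectedComponent = 2)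
    -- `I = I₁ ⊔ I₂` and `Iᶜ = J₁ ⊔ J₂` with all four pieces arcs
    (hIun : I₁ ∪ I₂ = I) (hJun : J₁ ∪ J₂ = Iᶜ)
    (hd1 : Disjoint I₁ I₂) (hd2 : Disjoint J₁ J₂)
    (ha1 : IsArc I₁) (ha2 : IsArc I₂) (ha3 : IsArc J₁) (ha4 : IsArc J₂) :
    ∀ K : Finset (ZMod n), 2 ≤ K.card → K.card ≤ n - 2 →
      2 ≤ Nat.card ((cycleGraph n).induce (K : Set (ZMod n))).ConnectedComponent →
      pairF I₁ I₂ J₁ J₂ K = if K = I ∨ K = Iᶜ then 1 else 0 := by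
  intro K hKc1 hKc2 hKcomp
  have hn2 : 2 ≤ n := by omega
  by_cases hKI : K = I ∨ K = Iᶜ
  · rw [if_pos hKI]
    simp only [pairF]
    rcases hKI with h | h
    · rw [if_pos (Or.inl ⟨by rw [h, hIun], by rw [h]; exact hJun.symm⟩)]
    · rw [if_pos (Or.inr (Or.inr (Or.inr (Or.inr (Or.inr
        ⟨by rw [h]; exact hJun.symm, by rw [h, compl_compl]; exact hIun.symm⟩)))))]
  · -- auxiliary facts
    have hcompl : J₁ ∪ J₂ = (I₁ ∪ I₂)ᶜ := by rw [hIun]; exact hJun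
    have hIcomp' : Nat.card ((cycleGraph n).induce
        ((I₁ ∪ I₂ : Finset (ZMod n)) : Set (ZMod n))).ConnectedComponent = 2 := by
      rw [hIun]; exact hIcomp
    have harc : ∀ S : Finset (ZMod n), IsArc S → K ≠ S := by
      intro S hS hEq
      obtain ⟨a, k, hk, hSe⟩ := hS
      have hSe' : S = arcOf a k := hSe
      rw [hEq, hSe'] at hKcomp
      rw [conn_card_one (arc_connected hn2 a hk)] at hKcomp
      exact absurd hKcomp (by norm_num)
    have harc2 : ∀ S : Finset (ZMod n), IsArc S → Kᶜ ≠ S := by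
      intro S hS hEq
      have hK : K = Sᶜ := by rw [← hEq, compl_compl]
      have hSu : S ≠ Finset.univ := by
        intro h
        rw [h, Finset.compl_univ] at hK
        rw [hK, Finset.card_empty] at hKc1
        omega
      obtain ⟨a, k, hk1, hkn, hSe⟩ := isArc_norm hS hSu
      have hKe : K = arcOf (a + (k : ZMod n)) (n - k) := by
        rw [hK, hSe, arcOf_compl hk1 hkn]
      exact harc _ ⟨a + (k : ZMod n), n - k, by omega, rfl⟩ hKe
    have h1 : ¬((K = I₁ ∪ I₂ ∧ Kᶜ = J₁ ∪ J₂) ∨ (K = I₁ ∪ J₁ ∧ Kᶜ = I₂ ∪ J₂) ∨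
        (K = I₁ ∪ J₂ ∧ Kᶜ = I₂ ∪ J₁) ∨ (K = I₂ ∪ J₁ ∧ Kᶜ = I₁ ∪ J₂) ∨
        (K = I₂ ∪ J₂ ∧ Kᶜ = I₁ ∪ J₁) ∨ (K = J₁ ∪ J₂ ∧ Kᶜ = I₁ ∪ I₂)) := by
      rintro (⟨hK, -⟩ | ⟨hK, -⟩ | ⟨hK, -⟩ | ⟨hK, -⟩ | ⟨hK, -⟩ | ⟨hK, -⟩)
      · exact hKI (Or.inl (by rw [hK, hIun]))
      · rw [hK] at hKcomp
        exact mixed_impossible hn I₁ I₂ J₁ J₂ hd1 hd2 hcompl ha1 ha2 ha3 ha4 hIcomp' hKcomp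
      · rw [hK] at hKcomp
        exact mixed_impossible hn I₁ I₂ J₂ J₁ hd1 hd2.symm
          (by rw [Finset.union_comm J₂ J₁]; exact hcompl) ha1 ha2 ha4 ha3 hIcomp' hKcomp
      · rw [hK] at hKcomp
        exact mixed_impossible hn I₂ I₁ J₁ J₂ hd1.symm hd2
          (by rw [Finset.union_comm I₂ I₁]; exact hcompl) ha2 ha1 ha3 ha4
          (by rw [Finset.union_comm I₂ I₁]; exact hIcomp') hKcomp
      · rw [hK] at hKcomp
        exact mixed_impossible hn I₂ I₁ J₂ J₁ hd1.symm hd2.symm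
          (by rw [Finset.union_comm I₂ I₁, Finset.union_comm J₂ J₁]; exact hcompl) ha2 ha1 ha4 ha3
          (by rw [Finset.union_comm I₂ I₁]; exact hIcomp') hKcomp
      · exact hKI (Or.inr (by rw [hK, hJun]))
    have h2 : ¬((K = I₁ ∧ 2 ≤ I₁.card) ∨ (K = I₂ ∧ 2 ≤ I₂.card) ∨
        (K = J₁ ∧ 2 ≤ J₁.card) ∨ (K = J₂ ∧ 2 ≤ J₂.card) ∨
        (Kᶜ = I₁ ∧ 2 ≤ I₁.card) ∨ (Kᶜ = I₂ ∧ 2 ≤ I₂.card) ∨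
        (Kᶜ = J₁ ∧ 2 ≤ J₁.card) ∨ (Kᶜ = J₂ ∧ 2 ≤ J₂.card)) := by
      rintro (⟨hK, -⟩ | ⟨hK, -⟩ | ⟨hK, -⟩ | ⟨hK, -⟩ | ⟨hK, -⟩ | ⟨hK, -⟩ | ⟨hK, -⟩ | ⟨hK, -⟩)
      · exact harc _ ha1 hK
      · exact harc _ ha2 hK
      · exact harc _ ha3 hK
      · exact harc _ ha4 hK
      · exact harc2 _ ha1 hK
      · exact harc2 _ ha2 hK
      · exact harc2 _ ha3 hK
      · exact harc2 _ ha4 hK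
    rw [if_neg hKI]
    simp only [pairF]
    rw [if_neg h1, if_neg h2]
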